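/- Let v ∈ [-1,1] with D(v) > 0, let λ ∈ (0,1), G ∈ [-1,1], and suppose the noise ξ satisfies |ξ| ≤ (1-λ)(1-|v|)/D(v). Then v'' = v + λ(G - v) + ξ D(v) satisfies |v''| ≤ 1. -/
import Mathlib

theorem stmt_2 (v G lam ξ : ℝ) (D : ℝ → ℝ)
    (hv : v ∈ Set.Icc (-1:ℝ) 1) (hG : G ∈ Set.Icc (-1:ℝ) 1)
    (hD : 0 < D v) (hlam : lam ∈ Set.Ioo (0:ℝ) 1)
    (hξ : |ξ| ≤ (1 - lam) * (1 - |v|) / D v) :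
    |v + lam * (G - v) + ξ * D v| ≤ 1 := by
  obtain ⟨hv1, hv2⟩ := hv
  obtain ⟨hG1, hG2⟩ := hG
  obtain ⟨hl1, hl2⟩ := hlam
  have hvabs : |v| ≤ 1 := abs_le.mpr ⟨hv1, hv2⟩
  have hGabs : |G| ≤ 1 := abs_le.mpr ⟨hG1, hG2⟩
  have hξD : |ξ * D v| ≤ (1 - lam) * (1 - |v|) := by
    rw [abs_mul, abs_of_pos hD]
    calc |ξ| * D v ≤ ((1 - lam) * (1 - |v|) / D v) * D v :=
          mul_le_mul_of_nonneg_right hξ hD.le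
      _ = (1 - lam) * (1 - |v|) := div_mul_cancel₀ _ hD.ne'
  have h1 : v + lam * (G - v) = (1 - lam) * v + lam * G := by ring
  calc |v + lam * (G - v) + ξ * D v|
      ≤ |v + lam * (G - v)| + |ξ * D v| := abs_add_le _ _
    _ ≤ ((1 - lam) * |v| + lam * |G|) + (1 - lam) * (1 - |v|) := by
        refine add_le_add ?_ hξD
        rw [h1]
        calc |(1 - lam) * v + lam * G| ≤ |(1 - lam) * v| + |lam * G| := abs_add_le _ _
          _ = (1 - lam) * |v| + lam * |G| := by
              rw [abs_mul, abs_mul, abs_of_pos (by linarith), abs_of_pos hl1]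
    _ ≤ 1 := by nlinarith
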